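/- Let α > 1, σ > 0, and for q ∈ [0,1] define F(q) = Ψ_α((1−q)·N(0,σ²) + q·N(1,σ²) ‖ N(0,σ²)), where Ψ_α(P‖Q) = ∫ p^α q^{1−α}. Then F is monotonically nondecreasing in q on [0,1], and F(0) = 1. -/

import Mathlib

open Real MeasureTheory

/-- Gaussian density on ℝ with mean `μ` and variance `σ²`. -/
noncomputable def gaussDens (μ σ : ℝ) (x : ℝ) : ℝ :=
  (σ * Real.sqrt (2 * Real.pi))⁻¹ * Real.exp (-(x - μ) ^ 2 / (2 * σ ^ 2))

/-- `F(q) = Ψ_α((1−q)N(0,σ²) + qN(1,σ²) ‖ N(0,σ²))`. -/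
noncomputable def mixturePsi (α σ q : ℝ) : ℝ :=
  ∫ x : ℝ, ((1 - q) * gaussDens 0 σ x + q * gaussDens 1 σ x) ^ α
    * (gaussDens 0 σ x) ^ (1 - α)

lemma gaussDens_pos {σ : ℝ} (hσ : 0 < σ) (μ x : ℝ) : 0 < gaussDens μ σ x := by
  unfold gaussDens
  positivity

lemma gaussDens_eq (μ : ℝ) {σ : ℝ} (hσ : 0 < σ) :
    gaussDens μ σ = fun x => ProbabilityTheory.gaussianPDFReal μ ⟨σ^2, sq_nonneg σ⟩ x := by
  funext x
  unfold gaussDens ProbabilityTheory.gaussianPDFReal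
  have : Real.sqrt (2 * Real.pi * (⟨σ^2, sq_nonneg σ⟩ : NNReal)) = σ * Real.sqrt (2 * Real.pi) := by
    push_cast
    rw [mul_comm, Real.sqrt_mul (sq_nonneg σ), Real.sqrt_sq hσ.le]
  simp only [NNReal.coe_mk] at this ⊢
  show _ = (Real.sqrt (2 * Real.pi * σ ^ 2))⁻¹ * Real.exp (-(x - μ) ^ 2 / (2 * σ ^ 2))
  rw [this]

lemma integrable_gaussDens (μ : ℝ) {σ : ℝ} (hσ : 0 < σ) : Integrable (gaussDens μ σ) := by
  rw [gaussDens_eq μ hσ]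
  exact ProbabilityTheory.integrable_gaussianPDFReal μ _

lemma integral_gaussDens (μ : ℝ) {σ : ℝ} (hσ : 0 < σ) : ∫ x : ℝ, gaussDens μ σ x = 1 := by
  rw [gaussDens_eq μ hσ]
  exact ProbabilityTheory.integral_gaussianPDFReal_eq_one μ (by
    intro h
    have : (σ:ℝ)^2 = 0 := congrArg NNReal.toReal h
    nlinarith)

lemma continuous_gaussDens (μ σ : ℝ) : Continuous (gaussDens μ σ) := by
  unfold gaussDens
  fun_prop

lemma gaussDens_rpow_mul (β μ ν : ℝ) {σ : ℝ} (hσ : 0 < σ) (x : ℝ) :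
    gaussDens μ σ x ^ β * gaussDens ν σ x ^ (1 - β) =
      Real.exp (((β*μ + (1-β)*ν)^2 - β * μ^2 - (1-β) * ν^2) / (2 * σ^2))
        * gaussDens (β*μ + (1-β)*ν) σ x := by
  have hA : (0:ℝ) < (σ * Real.sqrt (2 * Real.pi))⁻¹ := by positivity
  have h1 := gaussDens_pos hσ μ x
  have h2 := gaussDens_pos hσ ν x
  rw [Real.rpow_def_of_pos h1, Real.rpow_def_of_pos h2, ← Real.exp_add]
  unfold gaussDens
  simp only [Real.log_mul hA.ne' (Real.exp_pos _).ne', Real.log_exp]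
  rw [show ((σ * Real.sqrt (2 * Real.pi))⁻¹ * Real.exp (-(x - (β*μ + (1-β)*ν)) ^ 2 / (2 * σ ^ 2)))
      = Real.exp (Real.log (σ * Real.sqrt (2 * Real.pi))⁻¹ + (-(x - (β*μ + (1-β)*ν)) ^ 2 / (2 * σ ^ 2)))
      from by rw [Real.exp_add, Real.exp_log hA]]
  rw [← Real.exp_add]
  congr 1
  have hσ2 : σ^2 ≠ 0 := by positivity
  field_simp
  ring

lemma g0_rpow {σ : ℝ} (hσ : 0 < σ) (β x : ℝ) :
    gaussDens 0 σ x ^ β * gaussDens 0 σ x ^ (1 - β) = gaussDens 0 σ x := by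
  rw [← Real.rpow_add (gaussDens_pos hσ 0 x)]
  norm_num

lemma g1_g0_rpow {σ : ℝ} (hσ : 0 < σ) (β x : ℝ) :
    gaussDens 1 σ x ^ β * gaussDens 0 σ x ^ (1 - β) =
      Real.exp ((β^2 - β) / (2 * σ^2)) * gaussDens β σ x := by
  have h := gaussDens_rpow_mul β 1 0 hσ x
  norm_num at h
  rw [h]

lemma add_rpow_le_two_rpow {a b p : ℝ} (ha : 0 ≤ a) (hb : 0 ≤ b) (hp : 0 ≤ p) :
    (a + b) ^ p ≤ 2 ^ p * (a ^ p + b ^ p) := by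
  rcases le_total a b with h | h
  · calc (a + b) ^ p ≤ (2 * b) ^ p := Real.rpow_le_rpow (by linarith) (by linarith) hp
    _ = 2 ^ p * b ^ p := Real.mul_rpow (by norm_num) hb
    _ ≤ 2 ^ p * (a ^ p + b ^ p) := by
        have := Real.rpow_nonneg ha p
        have : (0:ℝ) ≤ (2:ℝ) ^ p := Real.rpow_nonneg (by norm_num) p
        nlinarith [Real.rpow_nonneg ha p]
  · calc (a + b) ^ p ≤ (2 * a) ^ p := Real.rpow_le_rpow (by linarith) (by linarith) hp
    _ = 2 ^ p * a ^ p := Real.mul_rpow (by norm_num) ha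
    _ ≤ 2 ^ p * (a ^ p + b ^ p) := by
        nlinarith [Real.rpow_nonneg hb p, Real.rpow_nonneg (show (0:ℝ) ≤ 2 by norm_num) p]

lemma mix_pos {σ q : ℝ} (hσ : 0 < σ) (hq0 : 0 ≤ q) (hq1 : q ≤ 1) (x : ℝ) :
    0 < (1 - q) * gaussDens 0 σ x + q * gaussDens 1 σ x := by
  rcases hq0.eq_or_lt with h | h
  · simp only [← h]
    simpa using gaussDens_pos hσ 0 x
  · have h0 := gaussDens_pos hσ 0 x
    have h1 := gaussDens_pos hσ 1 x
    nlinarith [mul_nonneg (sub_nonneg.2 hq1) h0.le]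

lemma integrand_integrable {α σ : ℝ} (q : ℝ) (hα : 1 < α) (hσ : 0 < σ) (hq0 : 0 ≤ q) (hq1 : q ≤ 1) :
    MeasureTheory.Integrable (fun x => ((1 - q) * gaussDens 0 σ x + q * gaussDens 1 σ x) ^ α
      * (gaussDens 0 σ x) ^ (1 - α)) := by
  have hg0 := gaussDens_pos hσ 0
  have hg1 := gaussDens_pos hσ 1
  have hm := mix_pos hσ hq0 hq1
  have hcont : Continuous fun x => ((1 - q) * gaussDens 0 σ x + q * gaussDens 1 σ x) ^ α
      * (gaussDens 0 σ x) ^ (1 - α) := by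
    apply Continuous.mul
    · exact ((continuous_const.mul (continuous_gaussDens 0 σ)).add
        (continuous_const.mul (continuous_gaussDens 1 σ))).rpow_const (fun x => Or.inl (hm x).ne')
    · exact (continuous_gaussDens 0 σ).rpow_const (fun x => Or.inl (hg0 x).ne')
  have hbound : MeasureTheory.Integrable (fun x =>
      2 ^ α * (gaussDens 0 σ x + Real.exp ((α^2 - α) / (2 * σ^2)) * gaussDens α σ x)) :=
    (((integrable_gaussDens 0 hσ).add ((integrable_gaussDens α hσ).const_mul _)).const_mul _)
  refine hbound.mono hcont.aestronglyMeasurable ?_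
  filter_upwards with x
  have hfnn : 0 ≤ ((1 - q) * gaussDens 0 σ x + q * gaussDens 1 σ x) ^ α
      * (gaussDens 0 σ x) ^ (1 - α) :=
    mul_nonneg (Real.rpow_nonneg (hm x).le _) (Real.rpow_nonneg (hg0 x).le _)
  rw [Real.norm_of_nonneg hfnn, Real.norm_of_nonneg (mul_nonneg (Real.rpow_nonneg (by norm_num) _)
    (add_nonneg (hg0 x).le (mul_nonneg (Real.exp_pos _).le (gaussDens_pos hσ α x).le)))]
  have h1 : ((1 - q) * gaussDens 0 σ x + q * gaussDens 1 σ x) ^ α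
      ≤ 2 ^ α * (gaussDens 0 σ x ^ α + gaussDens 1 σ x ^ α) := by
    calc ((1 - q) * gaussDens 0 σ x + q * gaussDens 1 σ x) ^ α
        ≤ (gaussDens 0 σ x + gaussDens 1 σ x) ^ α := by
          apply Real.rpow_le_rpow (hm x).le ?_ (by linarith)
          nlinarith [mul_nonneg hq0 (hg0 x).le, mul_nonneg (sub_nonneg.2 hq1) (hg1 x).le]
      _ ≤ 2 ^ α * (gaussDens 0 σ x ^ α + gaussDens 1 σ x ^ α) :=
          add_rpow_le_two_rpow (hg0 x).le (hg1 x).le (by linarith)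
  calc ((1 - q) * gaussDens 0 σ x + q * gaussDens 1 σ x) ^ α * (gaussDens 0 σ x) ^ (1 - α)
      ≤ 2 ^ α * (gaussDens 0 σ x ^ α + gaussDens 1 σ x ^ α) * (gaussDens 0 σ x) ^ (1 - α) :=
        mul_le_mul_of_nonneg_right h1 (Real.rpow_nonneg (hg0 x).le _)
    _ = 2 ^ α * (gaussDens 0 σ x ^ α * gaussDens 0 σ x ^ (1 - α)
          + gaussDens 1 σ x ^ α * gaussDens 0 σ x ^ (1 - α)) := by ring
    _ = 2 ^ α * (gaussDens 0 σ x + Real.exp ((α^2 - α) / (2 * σ^2)) * gaussDens α σ x) := by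
        rw [g0_rpow hσ, g1_g0_rpow hσ]

lemma bernoulli_pointwise {α σ q : ℝ} (hα : 1 < α) (hσ : 0 < σ) (hq0 : 0 ≤ q) (hq1 : q ≤ 1)
    (x : ℝ) :
    gaussDens 0 σ x + α * (q * (gaussDens 1 σ x - gaussDens 0 σ x))
      ≤ ((1 - q) * gaussDens 0 σ x + q * gaussDens 1 σ x) ^ α * gaussDens 0 σ x ^ (1 - α) := by
  set g0 := gaussDens 0 σ x with hg0def
  set m := (1 - q) * gaussDens 0 σ x + q * gaussDens 1 σ x with hmdef
  have hg0 : 0 < g0 := gaussDens_pos hσ 0 x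
  have hm : 0 < m := mix_pos hσ hq0 hq1 x
  have hs : (-1 : ℝ) ≤ m / g0 - 1 := by
    have : 0 ≤ m / g0 := div_nonneg hm.le hg0.le
    linarith
  have hb := one_add_mul_self_le_rpow_one_add hs hα.le
  rw [show 1 + (m / g0 - 1) = m / g0 by ring] at hb
  have hb2 : (1 + α * (m / g0 - 1)) * g0 ≤ (m / g0) ^ α * g0 :=
    mul_le_mul_of_nonneg_right hb hg0.le
  have he1 : (1 + α * (m / g0 - 1)) * g0 = g0 + α * (m - g0) := by
    field_simp
  have he2 : (m / g0) ^ α * g0 = m ^ α * g0 ^ (1 - α) := by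
    rw [Real.div_rpow hm.le hg0.le, Real.rpow_sub hg0, Real.rpow_one]
    field_simp
  rw [he1, he2] at hb2
  have : m - g0 = q * (gaussDens 1 σ x - g0) := by rw [hmdef]; ring
  rw [this] at hb2
  exact hb2

lemma mixturePsi_ge_one {α σ q : ℝ} (hα : 1 < α) (hσ : 0 < σ) (hq0 : 0 ≤ q) (hq1 : q ≤ 1) :
    1 ≤ mixturePsi α σ q := by
  have hint2 : MeasureTheory.Integrable
      (fun x => α * (q * (gaussDens 1 σ x - gaussDens 0 σ x))) := by
    apply MeasureTheory.Integrable.const_mul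
    apply MeasureTheory.Integrable.const_mul
    exact (integrable_gaussDens 1 hσ).sub (integrable_gaussDens 0 hσ)
  have hint : MeasureTheory.Integrable (fun x =>
      gaussDens 0 σ x + α * (q * (gaussDens 1 σ x - gaussDens 0 σ x))) :=
    (integrable_gaussDens 0 hσ).add hint2
  have h1 : ∫ x : ℝ, (gaussDens 0 σ x + α * (q * (gaussDens 1 σ x - gaussDens 0 σ x))) = 1 := by
    rw [MeasureTheory.integral_add (integrable_gaussDens 0 hσ) hint2,
      MeasureTheory.integral_const_mul, MeasureTheory.integral_const_mul,
      MeasureTheory.integral_sub (integrable_gaussDens 1 hσ) (integrable_gaussDens 0 hσ),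
      integral_gaussDens 0 hσ, integral_gaussDens 1 hσ]
    ring
  calc (1:ℝ) = ∫ x : ℝ, (gaussDens 0 σ x + α * (q * (gaussDens 1 σ x - gaussDens 0 σ x))) :=
        h1.symm
    _ ≤ mixturePsi α σ q :=
        MeasureTheory.integral_mono hint (integrand_integrable q hα hσ hq0 hq1)
          (fun x => bernoulli_pointwise hα hσ hq0 hq1 x)

/-- `F` is nondecreasing in `q` on `[0,1]` and `F(0) = 1`. -/
theorem mixturePsi_monotone_and_one (α σ : ℝ) (hα : 1 < α) (hσ : 0 < σ) :
    (∀ q q' : ℝ, 0 ≤ q → q ≤ q' → q' ≤ 1 → mixturePsi α σ q ≤ mixturePsi α σ q')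
    ∧ mixturePsi α σ 0 = 1 := by
  constructor
  · intro q q' hq hqq' hq'1
    rcases eq_or_lt_of_le (hq.trans hqq') with hq'0 | hq'0
    · have hq0 : q = 0 := le_antisymm (by linarith [hqq', hq'0]) hq
      rw [hq0, ← hq'0]
    · -- q' > 0
      set θ := 1 - q / q' with hθdef
      have hq'ne : q' ≠ 0 := hq'0.ne'
      have hθ0 : 0 ≤ θ := by
        have h : q / q' ≤ 1 := (div_le_one hq'0).2 hqq'
        rw [hθdef]
        linarith
      have hθ1 : 1 - θ = q / q' := by ring
      have h1θ0 : 0 ≤ 1 - θ := by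
        rw [hθ1]; positivity
      have hpt : ∀ x : ℝ, ((1 - q) * gaussDens 0 σ x + q * gaussDens 1 σ x) ^ α
          * gaussDens 0 σ x ^ (1 - α)
          ≤ θ * gaussDens 0 σ x + (1 - θ) * (((1 - q') * gaussDens 0 σ x
              + q' * gaussDens 1 σ x) ^ α * gaussDens 0 σ x ^ (1 - α)) := by
        intro x
        have hg0 : 0 < gaussDens 0 σ x := gaussDens_pos hσ 0 x
        have hm' : 0 < (1 - q') * gaussDens 0 σ x + q' * gaussDens 1 σ x :=
          mix_pos hσ (hq.trans hqq') hq'1 x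
        have hcomb : (1 - q) * gaussDens 0 σ x + q * gaussDens 1 σ x
            = θ * gaussDens 0 σ x + (1 - θ) * ((1 - q') * gaussDens 0 σ x
                + q' * gaussDens 1 σ x) := by
          rw [hθ1, hθdef]
          field_simp
          ring
        have hconv := (convexOn_rpow hα.le).2 (Set.mem_Ici.2 hg0.le) (Set.mem_Ici.2 hm'.le)
          hθ0 h1θ0 (by ring)
        simp only [smul_eq_mul] at hconv
        rw [hcomb]
        calc (θ * gaussDens 0 σ x + (1 - θ) * ((1 - q') * gaussDens 0 σ x
              + q' * gaussDens 1 σ x)) ^ α * gaussDens 0 σ x ^ (1 - α)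
            ≤ (θ * gaussDens 0 σ x ^ α + (1 - θ) * ((1 - q') * gaussDens 0 σ x
                + q' * gaussDens 1 σ x) ^ α) * gaussDens 0 σ x ^ (1 - α) :=
              mul_le_mul_of_nonneg_right hconv (Real.rpow_nonneg hg0.le _)
          _ = θ * (gaussDens 0 σ x ^ α * gaussDens 0 σ x ^ (1 - α))
              + (1 - θ) * (((1 - q') * gaussDens 0 σ x + q' * gaussDens 1 σ x) ^ α
                * gaussDens 0 σ x ^ (1 - α)) := by ring
          _ = θ * gaussDens 0 σ x + (1 - θ) * (((1 - q') * gaussDens 0 σ x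
              + q' * gaussDens 1 σ x) ^ α * gaussDens 0 σ x ^ (1 - α)) := by
              rw [g0_rpow hσ]
      have hintR1 : MeasureTheory.Integrable (fun x => θ * gaussDens 0 σ x) := by
        apply MeasureTheory.Integrable.const_mul
        exact integrable_gaussDens 0 hσ
      have hintR2 : MeasureTheory.Integrable (fun x =>
          (1 - θ) * (((1 - q') * gaussDens 0 σ x + q' * gaussDens 1 σ x) ^ α
            * gaussDens 0 σ x ^ (1 - α))) := by
        apply MeasureTheory.Integrable.const_mul
        exact integrand_integrable q' hα hσ (hq.trans hqq') hq'1
      have hintR : MeasureTheory.Integrable (fun x => θ * gaussDens 0 σ x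
          + (1 - θ) * (((1 - q') * gaussDens 0 σ x + q' * gaussDens 1 σ x) ^ α
            * gaussDens 0 σ x ^ (1 - α))) := hintR1.add hintR2
      have hstep : mixturePsi α σ q ≤ θ + (1 - θ) * mixturePsi α σ q' := by
        have h := MeasureTheory.integral_mono
          (integrand_integrable q hα hσ hq (hqq'.trans hq'1)) hintR hpt
        rw [MeasureTheory.integral_add hintR1 hintR2,
          MeasureTheory.integral_const_mul, MeasureTheory.integral_const_mul,
          integral_gaussDens 0 hσ, mul_one] at h
        exact h
      have hge1 : 1 ≤ mixturePsi α σ q' := mixturePsi_ge_one hα hσ (hq.trans hqq') hq'1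
      nlinarith [mul_nonneg hθ0 (sub_nonneg.2 hge1)]
  · have heq : mixturePsi α σ 0 = ∫ x : ℝ, gaussDens 0 σ x := by
      unfold mixturePsi
      congr 1
      funext x
      rw [show (1 - (0:ℝ)) * gaussDens 0 σ x + 0 * gaussDens 1 σ x = gaussDens 0 σ x by ring]
      rw [← Real.rpow_add (gaussDens_pos hσ 0 x)]
      norm_num
    rw [heq, integral_gaussDens 0 hσ]
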